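/- The function n ↦ 4n(2^{1/n} - 1) is strictly decreasing on the positive integers. -/

import Mathlib

/-- The function `n ↦ 4n(2^{1/n} - 1)` is strictly decreasing on the positive integers. -/
theorem stmt_0 :
    ∀ m n : ℕ, 0 < m → m < n →
      4 * (n : ℝ) * ((2 : ℝ) ^ (1 / (n : ℝ)) - 1)
        < 4 * (m : ℝ) * ((2 : ℝ) ^ (1 / (m : ℝ)) - 1) := by
  intro m n hm hmn
  have hm0 : (0 : ℝ) < m := by exact_mod_cast hm
  have hn0 : (0 : ℝ) < n := by exact_mod_cast hm.trans hmn
  set u : ℝ := Real.log 2 / n with hu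
  set v : ℝ := Real.log 2 / m with hv
  have hlog : (0 : ℝ) < Real.log 2 := Real.log_pos (by norm_num)
  have hu0 : 0 < u := div_pos hlog hn0
  have hv0 : 0 < v := div_pos hlog hm0
  have huv : u < v := by
    apply div_lt_div_of_pos_left hlog hm0
    exact_mod_cast hmn
  have key : (Real.exp u - Real.exp 0) / (u - 0) < (Real.exp v - Real.exp 0) / (v - 0) :=
    strictConvexOn_exp.secant_strict_mono (Set.mem_univ 0) (Set.mem_univ u) (Set.mem_univ v)
      hu0.ne' hv0.ne' huv
  rw [Real.exp_zero, sub_zero, sub_zero] at key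
  have h2n : (2 : ℝ) ^ (1 / (n : ℝ)) = Real.exp u := by
    rw [Real.rpow_def_of_pos (by norm_num), hu]; ring_nf
  have h2m : (2 : ℝ) ^ (1 / (m : ℝ)) = Real.exp v := by
    rw [Real.rpow_def_of_pos (by norm_num), hv]; ring_nf
  rw [h2n, h2m]
  have hn' : (n : ℝ) = Real.log 2 / u := by rw [eq_div_iff hu0.ne', hu]; field_simp
  have hm' : (m : ℝ) = Real.log 2 / v := by rw [eq_div_iff hv0.ne', hv]; field_simp
  rw [hn', hm']
  rw [div_lt_div_iff₀ hu0 hv0] at key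
  have h4 : (0 : ℝ) < 4 * Real.log 2 / (u * v) := by positivity
  calc 4 * (Real.log 2 / u) * (Real.exp u - 1)
      = 4 * Real.log 2 / (u * v) * ((Real.exp u - 1) * v) := by field_simp
    _ < 4 * Real.log 2 / (u * v) * ((Real.exp v - 1) * u) := by
        exact mul_lt_mul_of_pos_left key h4
    _ = 4 * (Real.log 2 / v) * (Real.exp v - 1) := by field_simp
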